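/- Let f be a Kneser function of order d≥1 and h(r)=r^s g(r) with s∈(0,∞) and g:(0,∞)→(0,∞) non-decreasing. If 0 < liminf_{r→0} f(r)/h(r) ≤ limsup_{r→0} f(r)/h(r) < ∞, then 0 < liminf_{r→0} f'_+(r)·r/h(r) and limsup_{r→0} f'_−(r)·r/h(r) < ∞. -/

import Mathlib

open Filter Set Topology

/-- A Kneser function of order `d`. -/
def IsKneser (f : ℝ → ℝ) (d : ℝ) : Prop :=
  (∀ x : ℝ, 0 < x → 0 < f x) ∧
  ∀ a b lam : ℝ, 0 < a → a ≤ b → 1 ≤ lam →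
    f (lam * b) - f (lam * a) ≤ lam ^ d * (f b - f a)

section aux

variable {f : ℝ → ℝ} {d : ℝ}

lemma pow_rpow_comm {lam : ℝ} (h : 0 ≤ lam) (n : ℕ) (d : ℝ) :
    ((lam ^ n : ℝ)) ^ d = (lam ^ d) ^ n := by
  rw [← Real.rpow_natCast lam n, ← Real.rpow_mul h, mul_comm, Real.rpow_mul h,
    Real.rpow_natCast]

lemma one_lt_rpow' {lam : ℝ} (hlam : 1 < lam) (hd : 1 ≤ d) : 1 < lam ^ d :=
  (Real.one_lt_rpow_iff_of_pos (lt_trans one_pos hlam)).2 (Or.inl ⟨hlam, lt_of_lt_of_le one_pos hd⟩)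

lemma one_le_rpow' {lam : ℝ} (hlam : 1 ≤ lam) (hd : 1 ≤ d) : 1 ≤ lam ^ d := by
  calc (1:ℝ) = 1 ^ d := (Real.one_rpow d).symm
  _ ≤ lam ^ d := Real.rpow_le_rpow zero_le_one hlam (le_trans zero_le_one hd)

/-- Key scaling bound: `f (lam * x) ≤ lam ^ d * f x`. -/
lemma kneser_scale (hf : IsKneser f d) (hd : 1 ≤ d) {x lam : ℝ} (hx : 0 < x) (hlam : 1 ≤ lam) :
    f (lam * x) ≤ lam ^ d * f x := by
  obtain ⟨hpos, hK⟩ := hf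
  rcases eq_or_lt_of_le hlam with h1 | h1
  · rw [← h1, one_mul, Real.one_rpow, one_mul]
  have hlam0 : 0 < lam := lt_trans one_pos h1
  have hld : 1 < lam ^ d := one_lt_rpow' h1 hd
  -- y k = (lam * x) / lam ^ k
  set y : ℕ → ℝ := fun k => (lam * x) / lam ^ k with hy
  have hy0 : ∀ k, 0 < y k := fun k => div_pos (mul_pos hlam0 hx) (pow_pos hlam0 k)
  have hystep : ∀ k, lam * y (k + 1) = y k := by
    intro k
    simp only [hy]
    field_simp [pow_succ]
    ring
  have claim1 : ∀ k, f (lam * x) - f x ≤ (lam ^ d) ^ k * (f (y k) - f (y (k + 1))) := by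
    intro k
    induction k with
    | zero =>
      have h0 : y 0 = lam * x := by simp [hy]
      have h1' : y 1 = x := by
        have := hystep 0
        rw [h0] at this
        exact mul_left_cancel₀ (ne_of_gt hlam0) this
      rw [pow_zero, one_mul, h0, h1']
    | succ k ih =>
      refine le_trans ih ?_
      rw [pow_succ, mul_assoc]
      refine mul_le_mul_of_nonneg_left ?_ (by positivity)
      have hle : y (k + 2) ≤ y (k + 1) := by
        rw [← hystep (k + 1)]
        nlinarith [hy0 (k + 2)]
      have := hK (y (k + 2)) (y (k + 1)) lam (hy0 _) hle (le_of_lt h1)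
      rwa [hystep, hystep] at this
  set u0 : ℝ := f (lam * x) - f x with hu0
  set ρ : ℝ := (lam ^ d)⁻¹ with hρ
  have hld0 : (0:ℝ) < lam ^ d := lt_trans one_pos hld
  have hρ0 : 0 < ρ := inv_pos.2 hld0
  have hρ1 : ρ < 1 := inv_lt_one_of_one_lt₀ hld
  have claim2 : ∀ k, u0 * ρ ^ k ≤ f (y k) - f (y (k + 1)) := by
    intro k
    have hpk : (0:ℝ) < (lam ^ d) ^ k := pow_pos hld0 k
    have h := claim1 k
    rw [hρ, inv_pow]
    rw [mul_inv_le_iff₀ hpk]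
    linarith [h]
  have claim3 : ∀ n, u0 * ∑ k ∈ Finset.range n, ρ ^ k ≤ f (lam * x) - f (y n) := by
    intro n
    have htel : ∑ k ∈ Finset.range n, (f (y k) - f (y (k + 1))) = f (y 0) - f (y n) :=
      Finset.sum_range_sub' (fun k => f (y k)) n
    have h0 : y 0 = lam * x := by simp [hy]
    calc u0 * ∑ k ∈ Finset.range n, ρ ^ k = ∑ k ∈ Finset.range n, u0 * ρ ^ k := by
          rw [Finset.mul_sum]
      _ ≤ ∑ k ∈ Finset.range n, (f (y k) - f (y (k + 1))) := Finset.sum_le_sum fun k _ => claim2 k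
      _ = f (lam * x) - f (y n) := by rw [htel, h0]
  have claim4 : ∀ n, u0 * ∑ k ∈ Finset.range n, ρ ^ k ≤ f (lam * x) :=
    fun n => le_trans (claim3 n) (by linarith [hpos (y n) (hy0 n)])
  rcases le_or_gt u0 0 with hu | hu
  · nlinarith [hpos x hx]
  · have hsum : Tendsto (fun n => ∑ k ∈ Finset.range n, ρ ^ k) atTop (𝓝 (1 - ρ)⁻¹) :=
      (hasSum_geometric_of_lt_one hρ0.le hρ1).tendsto_sum_nat
    have hlim : Tendsto (fun n => u0 * ∑ k ∈ Finset.range n, ρ ^ k) atTop (𝓝 (u0 * (1 - ρ)⁻¹)) :=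
      hsum.const_mul u0
    have hle : u0 * (1 - ρ)⁻¹ ≤ f (lam * x) :=
      le_of_tendsto hlim (Eventually.of_forall claim4)
    have h1ρ : 0 < 1 - ρ := by linarith
    have hmul : ρ * lam ^ d = 1 := inv_mul_cancel₀ (ne_of_gt hld0)
    rw [mul_inv_le_iff₀ h1ρ] at hle
    nlinarith [hpos x hx]

/-- Chaining upper bound: `f (lam ^ n * x) - f x ≤ (f (lam * x) - f x) * ∑_{k<n} (lam^d)^k`. -/
lemma kneser_chain (hf : IsKneser f d) {x lam : ℝ} (hx : 0 < x) (hlam : 1 ≤ lam) (n : ℕ) :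
    f (lam ^ n * x) - f x ≤ (f (lam * x) - f x) * ∑ k ∈ Finset.range n, (lam ^ d) ^ k := by
  obtain ⟨hpos, hK⟩ := hf
  have hlam0 : 0 < lam := lt_of_lt_of_le one_pos hlam
  induction n with
  | zero => simp
  | succ n ih =>
    have step : f (lam ^ (n + 1) * x) - f (lam ^ n * x) ≤ (lam ^ d) ^ n * (f (lam * x) - f x) := by
      have := hK x (lam * x) (lam ^ n) hx (by nlinarith) (one_le_pow₀ hlam)
      calc f (lam ^ (n + 1) * x) - f (lam ^ n * x) = f (lam ^ n * (lam * x)) - f (lam ^ n * x) := by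
            ring_nf
        _ ≤ (lam ^ n : ℝ) ^ d * (f (lam * x) - f x) := this
        _ = (lam ^ d) ^ n * (f (lam * x) - f x) := by rw [pow_rpow_comm hlam0.le]
    rw [Finset.sum_range_succ, mul_add]
    have : (f (lam * x) - f x) * (lam ^ d) ^ n = (lam ^ d) ^ n * (f (lam * x) - f x) := by ring
    rw [this]
    linarith

/-- Lower bound: `-(lam^d - 1) * f x ≤ f (lam * x) - f x`. -/
lemma kneser_lb (hf : IsKneser f d) (hd : 1 ≤ d) {x lam : ℝ} (hx : 0 < x) (hlam : 1 ≤ lam) :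
    -((lam ^ d - 1) * f x) ≤ f (lam * x) - f x := by
  have hpos := hf.1
  rcases eq_or_lt_of_le hlam with h1 | h1
  · rw [← h1]; simp
  have hlam0 : 0 < lam := lt_trans one_pos h1
  have hld : 1 < lam ^ d := one_lt_rpow' h1 hd
  rcases le_or_gt 0 (f (lam * x) - f x) with hA | hA
  · nlinarith [hpos x hx]
  obtain ⟨n, hn⟩ := pow_unbounded_of_one_lt (2:ℝ) h1
  have h2d : (2:ℝ) ≤ (lam ^ d) ^ n := by
    rw [← pow_rpow_comm hlam0.le]
    calc (2:ℝ) ≤ lam ^ n := hn.le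
      _ = (lam ^ n : ℝ) ^ (1:ℝ) := (Real.rpow_one _).symm
      _ ≤ (lam ^ n : ℝ) ^ d := Real.rpow_le_rpow_of_exponent_le (by nlinarith) hd
  have hS : ∑ k ∈ Finset.range n, (lam ^ d) ^ k = ((lam ^ d) ^ n - 1) / (lam ^ d - 1) :=
    geom_sum_eq (ne_of_gt hld) n
  have hchain := kneser_chain hf hx h1.le n
  have hlb : -(f x) < f (lam ^ n * x) - f x := by
    linarith [hpos (lam ^ n * x) (by positivity)]
  have hS1 : (1:ℝ) ≤ (lam ^ d - 1) * ∑ k ∈ Finset.range n, (lam ^ d) ^ k := by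
    rw [hS, mul_div_cancel₀ _ (by linarith : lam ^ d - 1 ≠ 0)]
    linarith
  have hSpos : (0:ℝ) < ∑ k ∈ Finset.range n, (lam ^ d) ^ k := by
    nlinarith
  nlinarith [hpos x hx, hchain, hlb]

/-- The normalized multiplicative difference quotient. -/
noncomputable def kq (f : ℝ → ℝ) (d x lam : ℝ) : ℝ := (f (lam * x) - f x) / (lam ^ d - 1)

lemma kq_le (hf : IsKneser f d) (hd : 1 ≤ d) {x lam : ℝ} (hx : 0 < x) (hlam : 1 < lam) :
    kq f d x lam ≤ f x := by
  have hld : 1 < lam ^ d := one_lt_rpow' hlam hd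
  rw [kq, div_le_iff₀ (by linarith)]
  nlinarith [kneser_scale hf hd hx hlam.le]

lemma kq_ge (hf : IsKneser f d) (hd : 1 ≤ d) {x lam : ℝ} (hx : 0 < x) (hlam : 1 < lam) :
    -(f x) ≤ kq f d x lam := by
  have hld : 1 < lam ^ d := one_lt_rpow' hlam hd
  rw [kq, le_div_iff₀ (by linarith)]
  nlinarith [kneser_lb hf hd hx hlam.le]

set_option maxHeartbeats 1000000 in
/-- The master one-sided Cauchy estimate. -/
lemma kneser_M (hf : IsKneser f d) (hd : 1 ≤ d) {x mu nu : ℝ} (hx : 0 < x)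
    (hmu : 1 < mu) (hmunu : mu ≤ nu) :
    kq f d x nu ≤ kq f d x mu + 2 * f x * nu ^ d * (mu ^ d - 1) / (nu ^ d - 1) := by
  classical
  have hpos := hf.1
  have hnu : 1 < nu := lt_of_lt_of_le hmu hmunu
  have hmu0 : (0:ℝ) < mu := lt_trans one_pos hmu
  have hnu0 : (0:ℝ) < nu := lt_trans one_pos hnu
  have hd0 : (0:ℝ) ≤ d := le_trans zero_le_one hd
  have hex : ∃ m, nu < mu ^ m := pow_unbounded_of_one_lt nu hmu
  set m0 := Nat.find hex with hm0def
  have hm0 : nu < mu ^ m0 := Nat.find_spec hex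
  have hm0ne : m0 ≠ 0 := by
    intro h
    rw [h, pow_zero] at hm0
    linarith
  set n := m0 - 1 with hndef
  have hsucc : n + 1 = m0 := Nat.succ_pred_eq_of_pos (Nat.pos_of_ne_zero hm0ne)
  have hn1 : mu ^ n ≤ nu := not_lt.1 (Nat.find_min hex (by omega))
  have hn2 : nu < mu ^ (n + 1) := by rw [hsucc]; exact hm0
  have hmn0 : (0:ℝ) < mu ^ n := pow_pos hmu0 n
  set ρ := nu / mu ^ n with hρdef
  have hρ1 : 1 ≤ ρ := (one_le_div hmn0).2 hn1
  have hρmu : ρ < mu := by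
    rw [hρdef, div_lt_iff₀ hmn0]
    rw [pow_succ] at hn2
    linarith
  have hρ0 : (0:ℝ) < ρ := lt_of_lt_of_le one_pos hρ1
  -- abbreviations
  set A := f (mu * x) - f x with hAdef
  set P := mu ^ d - 1 with hPdef
  set N := nu ^ d - 1 with hNdef
  have hP : (0:ℝ) < P := by have := one_lt_rpow' hmu hd; linarith
  have hN : (0:ℝ) < N := by have := one_lt_rpow' hnu hd; linarith
  set G := (mu ^ d) ^ n - 1 with hGdef
  have hmnd : ((mu ^ n : ℝ)) ^ d = (mu ^ d) ^ n := pow_rpow_comm hmu0.le n d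
  have hG0 : (0:ℝ) ≤ G := by
    have : (1:ℝ) ≤ (mu ^ d) ^ n := one_le_pow₀ (by nlinarith)
    linarith
  have hGN : G ≤ N := by
    have : ((mu ^ n : ℝ)) ^ d ≤ nu ^ d := Real.rpow_le_rpow hmn0.le hn1 hd0
    rw [hmnd] at this
    simp only [hGdef, hNdef]
    linarith
  have hrd1 : (1:ℝ) ≤ ρ ^ d := one_le_rpow' hρ1 hd
  have hrdm : ρ ^ d ≤ mu ^ d := Real.rpow_le_rpow hρ0.le hρmu.le hd0
  have hmnnu : ((mu ^ n : ℝ)) ^ d ≤ nu ^ d := Real.rpow_le_rpow hmn0.le hn1 hd0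
  have hnud0 : (0:ℝ) < nu ^ d := Real.rpow_pos_of_pos hnu0 d
  have hmnd0 : (0:ℝ) < ((mu ^ n : ℝ)) ^ d := Real.rpow_pos_of_pos hmn0 d
  -- N - G ≤ nu^d * P
  have hmulnu : nu = mu ^ n * ρ := by rw [hρdef]; field_simp
  have hNG : N - G ≤ nu ^ d * P := by
    have hsplit : nu ^ d = ((mu ^ n : ℝ)) ^ d * ρ ^ d := by
      rw [hmulnu, Real.mul_rpow hmn0.le hρ0.le]
    have h1 : N - G = ((mu ^ n : ℝ)) ^ d * (ρ ^ d - 1) := by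
      simp only [hNdef, hGdef, ← hmnd]
      rw [hsplit]; ring
    rw [h1]
    have : ρ ^ d - 1 ≤ P := by simp only [hPdef]; linarith
    nlinarith
  -- T1
  have hT1 : f (nu * x) - f (mu ^ n * x) ≤ nu ^ d * P * f x := by
    have hK := hf.2 x (ρ * x) (mu ^ n) hx (by nlinarith) (one_le_pow₀ hmu.le)
    have harg : (mu ^ n : ℝ) * (ρ * x) = nu * x := by rw [hmulnu]; ring
    rw [harg] at hK
    have hsc : f (ρ * x) - f x ≤ (ρ ^ d - 1) * f x := by
      nlinarith [kneser_scale hf hd hx hρ1]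
    have hfx := hpos x hx
    calc f (nu * x) - f (mu ^ n * x) ≤ ((mu ^ n : ℝ)) ^ d * (f (ρ * x) - f x) := hK
      _ ≤ ((mu ^ n : ℝ)) ^ d * ((ρ ^ d - 1) * f x) := by nlinarith [hpos (ρ * x) (by positivity)]
      _ ≤ nu ^ d * P * f x := by
          have hmm : ((mu ^ n : ℝ)) ^ d * (ρ ^ d - 1) ≤ nu ^ d * P :=
            mul_le_mul hmnnu (by simp only [hPdef]; linarith) (by linarith) hnud0.le
          nlinarith [hmm]
  -- T2
  have hT2 : f (mu ^ n * x) - f x ≤ A * (G / P) := by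
    have hS : ∑ k ∈ Finset.range n, (mu ^ d) ^ k = G / P :=
      geom_sum_eq (by nlinarith : mu ^ d ≠ 1) n
    have := kneser_chain hf hx hmu.le n
    rwa [hS] at this
  -- |A| ≤ P * f x
  have hAle : A ≤ P * f x := by
    simp only [hAdef, hPdef]
    nlinarith [kneser_scale hf hd hx hmu.le]
  have hAge : -(P * f x) ≤ A := by
    simp only [hAdef, hPdef]
    nlinarith [kneser_lb hf hd hx hmu.le]
  have hfx := hpos x hx
  -- A * G ≤ A * N + (P * f x) * (nu ^ d * P)
  have hAG : A * G ≤ A * N + P * f x * (nu ^ d * P) := by nlinarith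
  have hkey : f (nu * x) - f x ≤ A / P * N + 2 * f x * (nu ^ d * P) := by
    have h1 : f (nu * x) - f x ≤ A * (G / P) + nu ^ d * P * f x := by
      have hsum := add_le_add hT1 hT2
      ring_nf at hsum ⊢
      linarith [hsum]
    have h2 : A * (G / P) ≤ A / P * N + f x * (nu ^ d * P) := by
      rw [mul_div_assoc'] at *
      rw [div_mul_eq_mul_div, div_add' _ _ _ (ne_of_gt hP), div_le_div_iff_of_pos_right hP]
      nlinarith
    linarith
  rw [kq, kq, div_le_iff₀ hN]
  have hexp : (A / P + 2 * f x * nu ^ d * P / N) * N = A / P * N + 2 * f x * (nu ^ d * P) := by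
    field_simp
  rw [hexp]
  exact hkey

lemma kq_le_sSup (hf : IsKneser f d) (hd : 1 ≤ d) {x lam : ℝ} (hx : 0 < x) (hlam : 1 < lam) :
    kq f d x lam ≤ sSup (kq f d x '' Ioi 1) := by
  refine le_csSup ⟨f x, ?_⟩ ⟨lam, hlam, rfl⟩
  rintro b ⟨ν, hν, rfl⟩
  exact kq_le hf hd hx hν

lemma kq_tendsto (hf : IsKneser f d) (hd : 1 ≤ d) {x : ℝ} (hx : 0 < x) :
    Tendsto (kq f d x) (𝓝[>] 1) (𝓝 (sSup (kq f d x '' Ioi 1))) := by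
  have hfx := hf.1 x hx
  set Q := sSup (kq f d x '' Ioi 1) with hQ
  have hev3 : ∀ᶠ μ in 𝓝[>] (1:ℝ), 1 < μ := eventually_mem_nhdsWithin
  rw [tendsto_order]
  constructor
  · intro a ha
    obtain ⟨b, ⟨ν₀, hν₀, rfl⟩, hab⟩ :=
      exists_lt_of_lt_csSup (⟨kq f d x 2, 2, by norm_num, rfl⟩ : (kq f d x '' Ioi 1).Nonempty) ha
    have hν₀1 : (1:ℝ) < ν₀ := hν₀
    have hN0 : (0:ℝ) < ν₀ ^ d - 1 := by have := one_lt_rpow' hν₀1 hd; linarith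
    have hcont : Tendsto (fun μ : ℝ => 2 * f x * ν₀ ^ d * (μ ^ d - 1) / (ν₀ ^ d - 1))
        (𝓝[>] 1) (𝓝 0) := by
      have hμd : Tendsto (fun μ : ℝ => μ ^ d) (𝓝 (1:ℝ)) (𝓝 1) := by
        have := (Real.continuousAt_rpow_const 1 d (Or.inl one_ne_zero)).tendsto
        simpa [Real.one_rpow] using this
      have : Tendsto (fun μ : ℝ => 2 * f x * ν₀ ^ d * (μ ^ d - 1) / (ν₀ ^ d - 1)) (𝓝 (1:ℝ))
          (𝓝 (2 * f x * ν₀ ^ d * (1 - 1) / (ν₀ ^ d - 1))) :=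
        (((hμd.sub tendsto_const_nhds).const_mul _).div_const _)
      simpa using this.mono_left nhdsWithin_le_nhds
    have hev1 : ∀ᶠ μ in 𝓝[>] (1:ℝ),
        2 * f x * ν₀ ^ d * (μ ^ d - 1) / (ν₀ ^ d - 1) < kq f d x ν₀ - a :=
      hcont.eventually_lt_const (by linarith)
    have hev2 : ∀ᶠ μ in 𝓝[>] (1:ℝ), μ ≤ ν₀ :=
      eventually_of_mem (Ioc_mem_nhdsGT hν₀1) fun μ hμ => hμ.2
    filter_upwards [hev1, hev2, hev3] with μ h1 h2 h3
    have hM := kneser_M hf hd hx h3 h2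
    linarith
  · intro a ha
    filter_upwards [hev3] with μ h3
    exact lt_of_le_of_lt (kq_le_sSup hf hd hx h3) ha

lemma kneser_hasDerivWithinAt (hf : IsKneser f d) (hd : 1 ≤ d) {x : ℝ} (hx : 0 < x) :
    HasDerivWithinAt f (sSup (kq f d x '' Ioi 1) * d / x) (Ioi x) x := by
  rw [hasDerivWithinAt_iff_tendsto_slope' notMem_Ioi_self]
  have hmap : Tendsto (fun y : ℝ => y / x) (𝓝[>] x) (𝓝[>] 1) := by
    apply tendsto_nhdsWithin_of_tendsto_nhds_of_eventually_within
    · have h := (tendsto_id (α := ℝ) (x := 𝓝 x)).div_const x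
      rw [div_self (ne_of_gt hx)] at h
      exact h.mono_left nhdsWithin_le_nhds
    · exact eventually_mem_nhdsWithin.mono fun y hy => mem_Ioi.2 ((one_lt_div hx).2 hy)
  have hT : Tendsto (fun lam : ℝ => (lam ^ d - 1) / (lam - 1)) (𝓝[>] 1) (𝓝 d) := by
    have h := Real.hasDerivAt_rpow_const (x := (1:ℝ)) (p := d) (Or.inl one_ne_zero)
    rw [hasDerivAt_iff_tendsto_slope] at h
    have h2 := h.mono_left (nhdsWithin_mono _ (fun y (hy : y ∈ Ioi (1:ℝ)) =>
      (mem_compl_singleton_iff ..).2 (ne_of_gt hy)))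
    have hval : d * (1:ℝ) ^ (d - 1) = d := by rw [Real.one_rpow, mul_one]
    rw [hval] at h2
    exact h2.congr fun lam => by rw [slope_def_field, Real.one_rpow]
  have hq := kq_tendsto hf hd hx
  have hmain := (hq.mul hT).div_const x
  have hcomp := hmain.comp hmap
  refine Tendsto.congr' ?_ hcomp
  filter_upwards [eventually_mem_nhdsWithin] with y hy
  have hyx : x < y := hy
  have h1 : (1:ℝ) < y / x := (one_lt_div hx).2 hyx
  have hld : 1 < (y / x) ^ d := one_lt_rpow' h1 hd
  have hyy : (y / x) * x = y := div_mul_cancel₀ _ (ne_of_gt hx)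
  show kq f d x (y / x) * (((y / x) ^ d - 1) / (y / x - 1)) / x = slope f x y
  rw [slope_def_field, kq, hyy]
  have hne1 : (y / x) ^ d - 1 ≠ 0 := ne_of_gt (by linarith)
  have hne2 : y / x - 1 ≠ 0 := ne_of_gt (by linarith)
  have hne3 : y - x ≠ 0 := ne_of_gt (by linarith)
  field_simp

lemma kneser_derivWithin_Ioi (hf : IsKneser f d) (hd : 1 ≤ d) {x : ℝ} (hx : 0 < x) :
    derivWithin f (Ioi x) x = sSup (kq f d x '' Ioi 1) * d / x :=
  (kneser_hasDerivWithinAt hf hd hx).derivWithin (uniqueDiffWithinAt_Ioi x)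

lemma kneser_derivWithin_Iio_le (hf : IsKneser f d) (hd : 1 ≤ d) {x : ℝ} (hx : 0 < x) :
    derivWithin f (Iio x) x ≤ d * f x / x := by
  have hfx := hf.1 x hx
  have hd0 : (0:ℝ) < d := lt_of_lt_of_le one_pos hd
  by_cases hdiff : DifferentiableWithinAt ℝ f (Iio x) x
  · have hD := hdiff.hasDerivWithinAt
    rw [hasDerivWithinAt_iff_tendsto_slope' notMem_Iio_self] at hD
    refine le_of_tendsto hD ?_
    filter_upwards [eventually_of_mem (Ioo_mem_nhdsLT hx) fun y hy => hy]
      with y hy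
    obtain ⟨hy0, hyx⟩ := hy
    have hxy1 : (1:ℝ) ≤ x / y := (one_le_div hy0).2 hyx.le
    have hscale := kneser_scale hf hd hy0 hxy1
    rw [div_mul_cancel₀ _ (ne_of_gt hy0)] at hscale
    -- f y ≥ (y/x)^d * f x
    have hinv : (x / y) ^ d * (y / x) ^ d = 1 := by
      rw [← Real.mul_rpow (by positivity) (by positivity)]
      rw [div_mul_div_comm, mul_comm x y, div_self (by positivity), Real.one_rpow]
    have hyd0 : (0:ℝ) < (y / x) ^ d := Real.rpow_pos_of_pos (by positivity) d
    have hxd0 : (0:ℝ) < (x / y) ^ d := Real.rpow_pos_of_pos (by positivity) d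
    have hfy : (y / x) ^ d * f x ≤ f y := by
      have := mul_le_mul_of_nonneg_left hscale hyd0.le
      rw [← mul_assoc, mul_comm ((y/x)^d) ((x/y)^d), hinv, one_mul] at this
      linarith
    -- Bernoulli
    have hbern : 1 + d * (y / x - 1) ≤ (y / x) ^ d := by
      have hb := one_add_mul_self_le_rpow_one_add (s := y / x - 1) (p := d)
        (by nlinarith [div_pos hy0 hx]) hd
      have he : (1:ℝ) + (y / x - 1) = y / x := by ring
      rw [he] at hb
      exact hb
    have hkey : f x - f y ≤ d * f x / x * (x - y) := by
      have h2 : f x - f y ≤ f x * (1 - (y / x) ^ d) := by nlinarith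
      have h3 : (1 : ℝ) - (y / x) ^ d ≤ d * (1 - y / x) := by nlinarith
      have h4 : d * f x / x * (x - y) = d * f x * (1 - y / x) := by field_simp
      rw [h4]
      nlinarith
    rw [slope_def_field]
    rw [div_le_iff_of_neg (by linarith : y - x < 0)]
    nlinarith
  · rw [derivWithin_zero_of_not_differentiableWithinAt hdiff]
    positivity

end aux

set_option maxHeartbeats 1000000 in
theorem kneser_two_sided_gauge (f g : ℝ → ℝ) (d s : ℝ) (hd : 1 ≤ d)
    (hf : IsKneser f d) (hs : 0 < s)
    (hg_pos : ∀ r : ℝ, 0 < r → 0 < g r) (hg_mono : MonotoneOn g (Set.Ioi 0))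
    (h1 : 0 < Filter.liminf (fun r : ℝ => ((f r / (r ^ s * g r) : ℝ) : EReal)) (𝓝[>] (0 : ℝ)))
    (h2 : Filter.limsup (fun r : ℝ => ((f r / (r ^ s * g r) : ℝ) : EReal)) (𝓝[>] (0 : ℝ)) < ⊤) :
    0 < Filter.liminf
        (fun r : ℝ => ((derivWithin f (Set.Ioi r) r * r / (r ^ s * g r) : ℝ) : EReal))
        (𝓝[>] (0 : ℝ)) ∧
      Filter.limsup
        (fun r : ℝ => ((derivWithin f (Set.Iio r) r * r / (r ^ s * g r) : ℝ) : EReal))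
        (𝓝[>] (0 : ℝ)) < ⊤ := by
  have hd0 : (0:ℝ) < d := lt_of_lt_of_le one_pos hd
  have hpos := hf.1
  -- extract the two-sided comparison constants
  obtain ⟨c, h0c, hcl⟩ := EReal.exists_between_coe_real h1
  have hc0 : (0:ℝ) < c := by exact_mod_cast h0c
  obtain ⟨C0, hC0l, -⟩ := EReal.exists_between_coe_real h2
  set C : ℝ := max C0 (c + 1) with hCdef
  have hcC : c < C := lt_of_lt_of_le (lt_add_one c) (le_max_right _ _)
  have hC0' : (0:ℝ) < C := lt_trans hc0 hcC
  have hCl : Filter.limsup (fun r : ℝ => ((f r / (r ^ s * g r) : ℝ) : EReal)) (𝓝[>] (0 : ℝ))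
      < (C : EReal) := lt_of_lt_of_le hC0l (by exact_mod_cast le_max_left C0 (c+1))
  have hev_l := eventually_lt_of_lt_liminf hcl
  have hev_u := eventually_lt_of_limsup_lt hCl
  have hgood : ∀ᶠ r in 𝓝[>] (0:ℝ),
      c * (r ^ s * g r) < f r ∧ f r < C * (r ^ s * g r) := by
    filter_upwards [hev_l, hev_u, eventually_mem_nhdsWithin] with r hl hu hr
    have hr0 : (0:ℝ) < r := hr
    have hh : (0:ℝ) < r ^ s * g r := mul_pos (Real.rpow_pos_of_pos hr0 s) (hg_pos r hr0)
    have hl' : c < f r / (r ^ s * g r) := by exact_mod_cast hl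
    have hu' : f r / (r ^ s * g r) < C := by exact_mod_cast hu
    constructor
    · calc c * (r ^ s * g r) < (f r / (r ^ s * g r)) * (r ^ s * g r) := by
            exact mul_lt_mul_of_pos_right hl' hh
        _ = f r := div_mul_cancel₀ _ (ne_of_gt hh)
    · calc f r = (f r / (r ^ s * g r)) * (r ^ s * g r) := (div_mul_cancel₀ _ (ne_of_gt hh)).symm
        _ < C * (r ^ s * g r) := mul_lt_mul_of_pos_right hu' hh
  obtain ⟨δ, hδ0, hδ⟩ := (nhdsGT_basis (0:ℝ)).eventually_iff.mp hgood
  -- the amplification factor M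
  set M : ℝ := (2 * C / c) ^ (1 / s) with hMdef
  have h2Cc : (1:ℝ) < 2 * C / c := by
    rw [lt_div_iff₀ hc0]
    linarith
  have hM1 : 1 < M := by
    rw [hMdef]
    exact (Real.one_lt_rpow_iff_of_pos (by linarith)).2 (Or.inl ⟨h2Cc, by positivity⟩)
  have hM0 : (0:ℝ) < M := lt_trans one_pos hM1
  have hMs : M ^ s = 2 * C / c := by
    rw [hMdef, ← Real.rpow_mul (by linarith), one_div, inv_mul_cancel₀ (ne_of_gt hs),
      Real.rpow_one]
  have hMd : 1 < M ^ d := one_lt_rpow' hM1 hd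
  constructor
  · -- liminf bound
    set c₀ : ℝ := d * C / (M ^ d - 1) with hc₀def
    have hc₀ : (0:ℝ) < c₀ := by
      apply div_pos (by positivity)
      linarith
    have hlower : ∀ᶠ r in 𝓝[>] (0:ℝ),
        ((c₀ : ℝ) : EReal) ≤ ((derivWithin f (Set.Ioi r) r * r / (r ^ s * g r) : ℝ) : EReal) := by
      have hmem : Set.Ioo (0:ℝ) (δ / M) ∈ 𝓝[>] (0:ℝ) :=
        Ioo_mem_nhdsGT (by positivity)
      filter_upwards [eventually_of_mem hmem fun r hr => hr] with r hr
      obtain ⟨hr0, hrδM⟩ := hr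
      have hδM : δ / M < δ := by
        rw [div_lt_iff₀ hM0]
        nlinarith
      have hrδ : r < δ := lt_trans hrδM hδM
      have hMr0 : (0:ℝ) < M * r := by positivity
      have hMrδ : M * r < δ := by
        rw [lt_div_iff₀ hM0] at hrδM
        nlinarith [hrδM]
      have hg1 := hδ ⟨hr0, hrδ⟩
      have hg2 := hδ ⟨hMr0, hMrδ⟩
      have hh : (0:ℝ) < r ^ s * g r := mul_pos (Real.rpow_pos_of_pos hr0 s) (hg_pos r hr0)
      -- f (M * r) is large
      have hgmono : g r ≤ g (M * r) := hg_mono (mem_Ioi.2 hr0) (mem_Ioi.2 hMr0)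
        (by nlinarith)
      have hMrs : (M * r) ^ s = M ^ s * r ^ s := Real.mul_rpow hM0.le hr0.le
      have hflarge : 2 * C * (r ^ s * g r) ≤ f (M * r) := by
        have h1' := hg2.1
        have hgr0 : (0:ℝ) < g r := hg_pos r hr0
        have hrs0 : (0:ℝ) < r ^ s := Real.rpow_pos_of_pos hr0 s
        have : c * ((M * r) ^ s * g (M * r)) ≥ c * (M ^ s * r ^ s * g r) := by
          rw [hMrs]
          nlinarith [mul_le_mul_of_nonneg_left hgmono
            (by positivity : (0:ℝ) ≤ c * (M ^ s * r ^ s))]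
        have hcM : c * (M ^ s * r ^ s * g r) = 2 * C * (r ^ s * g r) := by
          rw [hMs]
          field_simp
        linarith
      -- kq at M
      have hkq : C * (r ^ s * g r) / (M ^ d - 1) ≤ kq f d r M := by
        rw [kq]
        rw [div_le_div_iff_of_pos_right (by linarith : (0:ℝ) < M ^ d - 1)]
        linarith [hg1.2, hflarge]
      have hQ : kq f d r M ≤ sSup (kq f d r '' Ioi 1) := kq_le_sSup hf hd hr0 hM1
      have hder : derivWithin f (Set.Ioi r) r = sSup (kq f d r '' Ioi 1) * d / r :=
        kneser_derivWithin_Ioi hf hd hr0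
      rw [EReal.coe_le_coe_iff, hder, div_mul_cancel₀ _ (ne_of_gt hr0), le_div_iff₀ hh]
      have hmul : C * (r ^ s * g r) / (M ^ d - 1) * d ≤ sSup (kq f d r '' Ioi 1) * d :=
        mul_le_mul_of_nonneg_right (le_trans hkq hQ) hd0.le
      have hc₀h : c₀ * (r ^ s * g r) = C * (r ^ s * g r) / (M ^ d - 1) * d := by
        rw [hc₀def]
        field_simp
      linarith
    calc (0:EReal) < ((c₀ : ℝ) : EReal) := by exact_mod_cast hc₀
      _ ≤ _ := le_liminf_of_le (by isBoundedDefault) hlower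
  · -- limsup bound
    have hupper : ∀ᶠ r in 𝓝[>] (0:ℝ),
        ((derivWithin f (Set.Iio r) r * r / (r ^ s * g r) : ℝ) : EReal) ≤ ((d * C : ℝ) : EReal) := by
      have hmem : Set.Ioo (0:ℝ) δ ∈ 𝓝[>] (0:ℝ) := Ioo_mem_nhdsGT hδ0
      filter_upwards [eventually_of_mem hmem fun r hr => hr] with r hr
      obtain ⟨hr0, hrδ⟩ := hr
      have hh : (0:ℝ) < r ^ s * g r := mul_pos (Real.rpow_pos_of_pos hr0 s) (hg_pos r hr0)
      have hfu := (hδ ⟨hr0, hrδ⟩).2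
      have hder := kneser_derivWithin_Iio_le hf hd hr0
      rw [EReal.coe_le_coe_iff]
      have h1' : derivWithin f (Set.Iio r) r * r ≤ d * f r := by
        calc derivWithin f (Set.Iio r) r * r ≤ (d * f r / r) * r :=
              mul_le_mul_of_nonneg_right hder hr0.le
          _ = d * f r := div_mul_cancel₀ _ (ne_of_gt hr0)
      calc derivWithin f (Set.Iio r) r * r / (r ^ s * g r) ≤ d * f r / (r ^ s * g r) := by
            rw [div_le_div_iff_of_pos_right hh]
            exact h1'
        _ ≤ d * C := by
            rw [div_le_iff₀ hh]
            nlinarith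
    exact lt_of_le_of_lt (limsup_le_of_le (by isBoundedDefault) hupper) (EReal.coe_lt_top _)
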